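/- Let n ≥ 1, T > 0, and let u, v : ℝ^n × [0,T] → ℝ be bounded and ℤ^n-periodic in the space variable. Fix ε, σ, γ > 0 and λ > 0, and define ℓ(ζ) := sup { Φ_ζ(x,t,y,s) : x, y ∈ ℝ^n, t, s ∈ [0,T) }. Assume that ℓ(ζ) = ℓ(0) for every ζ ∈ ℝ^n with ‖ζ‖ ≤ λ, and that there exist x̂ ∈ ℝ^n and t̂, ŝ ∈ [0,T) with Φ_0(x̂, t̂, x̂, ŝ) = ℓ(0). Then for all t, s ∈ [0,T) and all x, y ∈ ℝ^n with d(x − y) ≤ λ one has u(x,t) − v(y,s) − S(t,s) ≤ u(x̂,t̂) − v(x̂,ŝ) − S(t̂,ŝ). -/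

import Mathlib

noncomputable section

/-- The vector in `ℝⁿ` with integer coordinates `k`. -/
def intVec (n : ℕ) (k : Fin n → ℤ) : EuclideanSpace ℝ (Fin n) :=
  WithLp.toLp 2 (fun i => (k i : ℝ))

/-- Torus distance: `d(x) := inf_{k ∈ ℤⁿ} ‖x + k‖`. -/
def torusDist (n : ℕ) (x : EuclideanSpace ℝ (Fin n)) : ℝ :=
  ⨅ k : Fin n → ℤ, ‖x + intVec n k‖

/-- `S(t,s) := |t-s|²/(2σ) + γ/(T-t) + γ/(T-s)`. -/
def Sfun (T σ γ t s : ℝ) : ℝ :=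
  |t - s| ^ 2 / (2 * σ) + γ / (T - t) + γ / (T - s)

/-- `Φ_ζ(x,t,y,s) := u(x,t) - v(y,s) - d(x-y-ζ)²/(2ε) - S(t,s)`. -/
def Phi (n : ℕ) (u v : EuclideanSpace ℝ (Fin n) × ℝ → ℝ) (T ε σ γ : ℝ)
    (ζ x : EuclideanSpace ℝ (Fin n)) (t : ℝ) (y : EuclideanSpace ℝ (Fin n)) (s : ℝ) : ℝ :=
  u (x, t) - v (y, s) - torusDist n (x - y - ζ) ^ 2 / (2 * ε) - Sfun T σ γ t s

/-- `ℓ(ζ) := sup { Φ_ζ(x,t,y,s) : x, y ∈ ℝⁿ, t, s ∈ [0,T) }`. -/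
def ell (n : ℕ) (u v : EuclideanSpace ℝ (Fin n) × ℝ → ℝ) (T ε σ γ : ℝ)
    (ζ : EuclideanSpace ℝ (Fin n)) : ℝ :=
  sSup {r : ℝ | ∃ x y : EuclideanSpace ℝ (Fin n), ∃ t ∈ Set.Ico (0 : ℝ) T,
    ∃ s ∈ Set.Ico (0 : ℝ) T, r = Phi n u v T ε σ γ ζ x t y s}

lemma torusDist_nonneg (n : ℕ) (x : EuclideanSpace ℝ (Fin n)) : 0 ≤ torusDist n x :=
  Real.iInf_nonneg fun _ => norm_nonneg _

lemma torusDist_le (n : ℕ) (x : EuclideanSpace ℝ (Fin n)) (k : Fin n → ℤ) :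
    torusDist n x ≤ ‖x + intVec n k‖ :=
  ciInf_le ⟨0, by rintro r ⟨k, rfl⟩; exact norm_nonneg _⟩ k

lemma intVec_zero (n : ℕ) : intVec n 0 = 0 := by
  ext i; simp [intVec]

lemma torusDist_zero (n : ℕ) : torusDist n 0 = 0 := by
  refine le_antisymm ?_ (torusDist_nonneg n 0)
  have := torusDist_le n 0 0
  simpa [intVec_zero] using this

lemma Sfun_nonneg {T σ γ t s : ℝ} (hσ : 0 < σ) (hγ : 0 < γ)
    (ht : t ∈ Set.Ico (0 : ℝ) T) (hs : s ∈ Set.Ico (0 : ℝ) T) : 0 ≤ Sfun T σ γ t s := by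
  have h1 : 0 ≤ |t - s| ^ 2 / (2 * σ) := div_nonneg (sq_nonneg _) (by linarith)
  have h2 : 0 ≤ γ / (T - t) := div_nonneg hγ.le (by linarith [ht.2])
  have h3 : 0 ≤ γ / (T - s) := div_nonneg hγ.le (by linarith [hs.2])
  unfold Sfun; linarith

/-- Ordering at a diagonal maximizer of `Φ₀` when `ℓ` is constant for small shifts. -/
theorem order_in_doubling (n : ℕ) (hn : 1 ≤ n) (T : ℝ) (hT : 0 < T)
    (u v : EuclideanSpace ℝ (Fin n) × ℝ → ℝ)
    (hub : ∃ C : ℝ, ∀ x : EuclideanSpace ℝ (Fin n), ∀ t ∈ Set.Icc (0 : ℝ) T, |u (x, t)| ≤ C)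
    (hvb : ∃ C : ℝ, ∀ x : EuclideanSpace ℝ (Fin n), ∀ t ∈ Set.Icc (0 : ℝ) T, |v (x, t)| ≤ C)
    (huper : ∀ (x : EuclideanSpace ℝ (Fin n)) (k : Fin n → ℤ) (t : ℝ),
      u (x + intVec n k, t) = u (x, t))
    (hvper : ∀ (x : EuclideanSpace ℝ (Fin n)) (k : Fin n → ℤ) (t : ℝ),
      v (x + intVec n k, t) = v (x, t))
    (ε σ γ lam : ℝ) (hε : 0 < ε) (hσ : 0 < σ) (hγ : 0 < γ) (hlam : 0 < lam)
    (hconst : ∀ ζ : EuclideanSpace ℝ (Fin n), ‖ζ‖ ≤ lam →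
      ell n u v T ε σ γ ζ = ell n u v T ε σ γ 0)
    (xhat : EuclideanSpace ℝ (Fin n)) (that shat : ℝ)
    (hthat : that ∈ Set.Ico (0 : ℝ) T) (hshat : shat ∈ Set.Ico (0 : ℝ) T)
    (hmax : Phi n u v T ε σ γ 0 xhat that xhat shat = ell n u v T ε σ γ 0) :
    ∀ t ∈ Set.Ico (0 : ℝ) T, ∀ s ∈ Set.Ico (0 : ℝ) T,
      ∀ x y : EuclideanSpace ℝ (Fin n), torusDist n (x - y) ≤ lam →
        u (x, t) - v (y, s) - Sfun T σ γ t s ≤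
          u (xhat, that) - v (xhat, shat) - Sfun T σ γ that shat := by
  obtain ⟨Cu, hCu⟩ := hub
  obtain ⟨Cv, hCv⟩ := hvb
  have hbdd : ∀ ζ : EuclideanSpace ℝ (Fin n),
      BddAbove {r : ℝ | ∃ x y : EuclideanSpace ℝ (Fin n), ∃ t ∈ Set.Ico (0 : ℝ) T,
        ∃ s ∈ Set.Ico (0 : ℝ) T, r = Phi n u v T ε σ γ ζ x t y s} := by
    intro ζ
    refine ⟨Cu + Cv, ?_⟩
    rintro r ⟨x, y, t, ht, s, hs, rfl⟩
    have hu := abs_le.mp (hCu x t ⟨ht.1, ht.2.le⟩)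
    have hv := abs_le.mp (hCv y s ⟨hs.1, hs.2.le⟩)
    have hd : 0 ≤ torusDist n (x - y - ζ) ^ 2 / (2 * ε) :=
      div_nonneg (sq_nonneg _) (by linarith)
    have hS := Sfun_nonneg hσ hγ ht hs
    unfold Phi; linarith
  intro t ht s hs x y hdxy
  have hPhi0 : Phi n u v T ε σ γ 0 xhat that xhat shat =
      u (xhat, that) - v (xhat, shat) - Sfun T σ γ that shat := by
    unfold Phi
    rw [sub_zero, sub_self, torusDist_zero]
    ring
  refine le_of_forall_pos_le_add ?_
  intro η hη
  set δ : ℝ := Real.sqrt (2 * ε * η) with hδdef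
  have hδpos : 0 < δ := Real.sqrt_pos.mpr (by positivity)
  have hδ2 : δ ^ 2 = 2 * ε * η := Real.sq_sqrt (by positivity)
  have hlt : (⨅ k : Fin n → ℤ, ‖x - y + intVec n k‖) < lam + δ := by
    have : torusDist n (x - y) < lam + δ := lt_of_le_of_lt hdxy (by linarith)
    exact this
  obtain ⟨k, hk⟩ := exists_lt_of_ciInf_lt hlt
  set w : EuclideanSpace ℝ (Fin n) := x - y + intVec n k with hwdef
  obtain ⟨ζ, hζnorm, hwζ⟩ : ∃ ζ : EuclideanSpace ℝ (Fin n), ‖ζ‖ ≤ lam ∧ ‖w - ζ‖ ≤ δ := by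
    by_cases hw : ‖w‖ ≤ lam
    · exact ⟨w, hw, by simp [hδpos.le]⟩
    · push_neg at hw
      have hwpos : 0 < ‖w‖ := lt_trans hlam hw
      refine ⟨(lam / ‖w‖) • w, ?_, ?_⟩
      · rw [norm_smul, Real.norm_eq_abs, abs_of_pos (by positivity),
          div_mul_cancel₀ _ hwpos.ne']
      · have : w - (lam / ‖w‖) • w = (1 - lam / ‖w‖) • w := by
          rw [sub_smul, one_smul]
        rw [this, norm_smul, Real.norm_eq_abs,
          abs_of_nonneg (by rw [sub_nonneg]; exact (div_le_one hwpos).mpr hw.le),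
          sub_mul, one_mul, div_mul_cancel₀ _ hwpos.ne']
        linarith
  have hdz : torusDist n (x - y - ζ) ≤ δ := by
    have h1 : torusDist n (x - y - ζ) ≤ ‖x - y - ζ + intVec n k‖ := torusDist_le _ _ _
    have h2 : x - y - ζ + intVec n k = w - ζ := by rw [hwdef]; abel
    rw [h2] at h1
    exact h1.trans hwζ
  have hsq : torusDist n (x - y - ζ) ^ 2 ≤ δ ^ 2 :=
    pow_le_pow_left₀ (torusDist_nonneg _ _) hdz 2
  have hdivle : torusDist n (x - y - ζ) ^ 2 / (2 * ε) ≤ η := by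
    rw [div_le_iff₀ (by linarith)]
    linarith [hδ2]
  have hmem : Phi n u v T ε σ γ ζ x t y s ∈ {r : ℝ | ∃ x y : EuclideanSpace ℝ (Fin n),
      ∃ t ∈ Set.Ico (0 : ℝ) T, ∃ s ∈ Set.Ico (0 : ℝ) T, r = Phi n u v T ε σ γ ζ x t y s} :=
    ⟨x, y, t, ht, s, hs, rfl⟩
  have hle : Phi n u v T ε σ γ ζ x t y s ≤ ell n u v T ε σ γ ζ := le_csSup (hbdd ζ) hmem
  rw [hconst ζ hζnorm, ← hmax, hPhi0] at hle
  have hPhiζ : Phi n u v T ε σ γ ζ x t y s =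
      u (x, t) - v (y, s) - torusDist n (x - y - ζ) ^ 2 / (2 * ε) - Sfun T σ γ t s := rfl
  rw [hPhiζ] at hle
  linarith
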